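/- arXiv:1709.04828 — 3 statements merged into one kernel-verified Lean document; each statement's English description precedes it below -/
import Mathlib

section
/- Let p be a prime, A a finite abelian p-group, and F a proper family of subgroups of A. Then min{ rk_p(Â/C) : C ≤ Â such that for every A' ∈ F one has Ann(A') ⊄ C } = min{ rk_p(B) : B ≤ A with B ∉ F }, and the right-hand side is by definition the p-corank cork_p(F). (Both minima are over nonempty sets: the trivial subgroup C qualifies on the left since A ∉ F.) -/
/-- The p-rank of an abelian (multiplicative) group `B`:
the dimension of the `𝔽_p`-vector space `B ⊗_ℤ 𝔽_p`. -/
noncomputable def pRank (p : ℕ) (B : Type) [CommGroup B] : ℕ :=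
  Module.finrank (ZMod p) (TensorProduct ℤ (ZMod p) (Additive B))

section helpers

lemma hasEnough (G : Type) [CommGroup G] [Finite G] :
    HasEnoughRootsOfUnity ℂ (Monoid.exponent G) := by
  have : NeZero ((Monoid.exponent G : ℂ)) :=
    ⟨by exact_mod_cast Monoid.exponent_ne_zero_of_finite⟩
  infer_instance

lemma dualEquiv (G : Type) [CommGroup G] [Finite G] :
    Nonempty ((G →* ℂˣ) ≃* G) := by
  have := hasEnough G
  exact CommGroup.monoidHom_mulEquiv_of_hasEnoughRootsOfUnity G ℂ

lemma sep (G : Type) [CommGroup G] [Finite G] {a : G} (ha : a ≠ 1) :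
    ∃ φ : G →* ℂˣ, φ a ≠ 1 := by
  have := hasEnough G
  exact CommGroup.exists_apply_ne_one_of_hasEnoughRootsOfUnity G ℂ ha

lemma pRank_congr {p : ℕ} {B B' : Type} [CommGroup B] [CommGroup B']
    (e : B ≃* B') : pRank p B = pRank p B' := by
  let e₁ : Additive B ≃+ Additive B' := MulEquiv.toAdditive e
  let e₂ := TensorProduct.congr (LinearEquiv.refl ℤ (ZMod p)) e₁.toIntLinearEquiv
  have h : ∀ (c : ZMod p) (x : TensorProduct ℤ (ZMod p) (Additive B)),
      e₂ (c • x) = c • e₂ x := by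
    intro c x
    obtain ⟨n, rfl⟩ := ZMod.intCast_surjective c
    rw [Int.cast_smul_eq_zsmul, Int.cast_smul_eq_zsmul, map_zsmul]
  exact (AddEquiv.toLinearEquiv e₂.toAddEquiv h :
    TensorProduct ℤ (ZMod p) (Additive B) ≃ₗ[ZMod p]
      TensorProduct ℤ (ZMod p) (Additive B')).finrank_eq

end helpers

/-- The annihilator of a subgroup `A' ≤ A` inside the character group `Hom(A, ℂˣ)`:
the subgroup of characters that are trivial on `A'`. -/
def ann {A : Type} [CommGroup A] (A' : Subgroup A) : Subgroup (A →* ℂˣ) where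
  carrier := {χ | ∀ a ∈ A', χ a = 1}
  one_mem' := by intro a _; rfl
  mul_mem' := by
    intro χ ψ hχ hψ a ha
    simp [hχ a ha, hψ a ha]
  inv_mem' := by
    intro χ hχ a ha
    simp [hχ a ha]

section duality

variable {A : Type} [CommGroup A] [Finite A]

/-- evaluation into the double dual -/
def evalHom (A : Type) [CommGroup A] : A →* ((A →* ℂˣ) →* ℂˣ) where
  toFun a :=
    { toFun := fun χ => χ a
      map_one' := rfl
      map_mul' := fun χ ψ => rfl }
  map_one' := by ext χ; simp
  map_mul' := by intro a b; ext χ; simp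

lemma card_dual (G : Type) [CommGroup G] [Finite G] :
    Nat.card (G →* ℂˣ) = Nat.card G :=
  Nat.card_congr (dualEquiv G).some.toEquiv

instance finite_dual (G : Type) [CommGroup G] [Finite G] : Finite (G →* ℂˣ) :=
  Finite.of_equiv G (dualEquiv G).some.toEquiv.symm

lemma evalHom_bijective : Function.Bijective (evalHom A) := by
  rw [Nat.bijective_iff_injective_and_card]
  constructor
  · intro a b hab
    by_contra hne
    obtain ⟨φ, hφ⟩ := sep A (ha := show a * b⁻¹ ≠ 1 by
      simpa [mul_inv_eq_one] using hne)
    apply hφ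
    have : φ a = φ b := by
      have := congrArg (fun f => f φ) hab
      simpa [evalHom] using this
    simp [map_mul, this]
  · rw [card_dual, card_dual]

/-- separation modulo a subgroup -/
lemma sep_subgroup {B : Subgroup A} {a : A} (ha : a ∉ B) :
    ∃ χ : A →* ℂˣ, χ ∈ ann B ∧ χ a ≠ 1 := by
  have h1 : (QuotientGroup.mk a : A ⧸ B) ≠ 1 := by
    simpa [QuotientGroup.eq_one_iff] using ha
  obtain ⟨φ, hφ⟩ := sep (A ⧸ B) h1
  refine ⟨φ.comp (QuotientGroup.mk' B), ?_, hφ⟩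
  intro b hb
  have : (QuotientGroup.mk b : A ⧸ B) = 1 := (QuotientGroup.eq_one_iff b).mpr hb
  simp [MonoidHom.comp_apply, QuotientGroup.mk'_apply, this]

def perp (C : Subgroup (A →* ℂˣ)) : Subgroup A where
  carrier := {a | ∀ χ ∈ C, χ a = 1}
  one_mem' := by intro χ _; simp
  mul_mem' := by
    intro a b ha hb χ hχ
    simp [map_mul, ha χ hχ, hb χ hχ]
  inv_mem' := by
    intro a ha χ hχ
    simp [ha χ hχ]

lemma perp_ann (B : Subgroup A) : perp (ann B) = B := by
  ext a
  constructor
  · intro h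
    by_contra ha
    obtain ⟨χ, hχ, hχa⟩ := sep_subgroup ha
    exact hχa (h χ hχ)
  · intro ha χ hχ
    exact hχ a ha

lemma ann_perp (C : Subgroup (A →* ℂˣ)) : ann (perp C) = C := by
  ext ψ
  constructor
  · intro h
    by_contra hψ
    obtain ⟨Ξ, hΞ, hΞψ⟩ := sep_subgroup (A := A →* ℂˣ) (B := C) hψ
    obtain ⟨a, rfl⟩ := evalHom_bijective.surjective Ξ
    have haperp : a ∈ perp C := fun χ hχ => hΞ χ hχ
    exact hΞψ (h a haperp)
  · intro hψ a ha
    exact ha ψ hψ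

end duality

section quot

variable {A : Type} [CommGroup A] [Finite A]

def res (B : Subgroup A) : (A →* ℂˣ) →* (B →* ℂˣ) where
  toFun χ := χ.comp B.subtype
  map_one' := rfl
  map_mul' := fun χ ψ => rfl

lemma ker_res (B : Subgroup A) : (res (A := A) B).ker = ann B := by
  ext χ
  simp only [MonoidHom.mem_ker, res, MonoidHom.coe_mk, OneHom.coe_mk]
  constructor
  · intro h a ha
    have := DFunLike.congr_fun h (⟨a, ha⟩ : B)
    simpa using this
  · intro h
    ext b
    simpa using h b.1 b.2

def annEquiv (B : Subgroup A) : ((A ⧸ B) →* ℂˣ) ≃ (ann B) where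
  toFun φ := ⟨φ.comp (QuotientGroup.mk' B), fun a ha => by
    have : (QuotientGroup.mk a : A ⧸ B) = 1 := (QuotientGroup.eq_one_iff a).mpr ha
    simp [MonoidHom.comp_apply, this]⟩
  invFun χ := QuotientGroup.lift B χ.1 (fun a ha => χ.2 a ha)
  left_inv φ := by
    ext x
    simp
    rfl
  right_inv χ := by
    apply Subtype.ext
    ext a
    simp
    rfl

lemma card_ann (B : Subgroup A) : Nat.card (ann B) = Nat.card (A ⧸ B) := by
  rw [← Nat.card_congr (annEquiv B), card_dual]

lemma res_surjective (B : Subgroup A) : Function.Surjective (res (A := A) B) := by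
  have hApos : 0 < Nat.card (A ⧸ B) := Nat.card_pos
  have h1 : Nat.card (res (A := A) B).range * Nat.card (A ⧸ B) = Nat.card (A →* ℂˣ) := by
    rw [← card_ann B, Subgroup.card_eq_card_quotient_mul_card_subgroup (ann B), ← ker_res B,
      Nat.card_congr (QuotientGroup.quotientKerEquivRange (res (A := A) B)).toEquiv]
  have h2 : Nat.card (B →* ℂˣ) * Nat.card (A ⧸ B) = Nat.card (A →* ℂˣ) := by
    rw [card_dual, card_dual, Subgroup.card_eq_card_quotient_mul_card_subgroup B, mul_comm]
  have hcard : Nat.card (res (A := A) B).range = Nat.card (B →* ℂˣ) :=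
    Nat.eq_of_mul_eq_mul_right hApos (h1.trans h2.symm)
  have : (res (A := A) B).range = ⊤ := Subgroup.eq_top_of_card_eq _ hcard
  exact MonoidHom.range_eq_top.mp this

lemma quot_ann_equiv (B : Subgroup A) :
    Nonempty (((A →* ℂˣ) ⧸ ann B) ≃* B) := by
  obtain ⟨e⟩ := dualEquiv B
  refine ⟨MulEquiv.trans ?_ e⟩
  rw [← ker_res B]
  exact QuotientGroup.quotientKerEquivOfSurjective _ (res_surjective B)

end quot

/-- Let `p` be a prime, `A` a finite abelian `p`-group and `F` a proper family of
subgroups of `A` (closed under passing to subgroups, with `A ∉ F`).  Then the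
minimum of `rk_p(Â/C)` over subgroups `C` of the character group `Â` such that
`Ann(A') ⊄ C` for all `A' ∈ F` equals the minimum of `rk_p(B)` over subgroups
`B ≤ A` with `B ∉ F` (the `p`-corank of `F`). -/
theorem min_rank_dual_quotient_eq_corank (p : ℕ) (hp : p.Prime)
    (A : Type) [CommGroup A] [Finite A] (hA : IsPGroup p A)
    (F : Set (Subgroup A))
    (hF : ∀ B C : Subgroup A, B ≤ C → C ∈ F → B ∈ F)
    (hproper : (⊤ : Subgroup A) ∉ F) :
    sInf {n : ℕ | ∃ C : Subgroup (A →* ℂˣ),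
        (∀ A' ∈ F, ¬ ann A' ≤ C) ∧ n = pRank p ((A →* ℂˣ) ⧸ C)} =
    sInf {n : ℕ | ∃ B : Subgroup A, B ∉ F ∧ n = pRank p B} := by
  congr 1
  ext n
  constructor
  · rintro ⟨C, hC, rfl⟩
    refine ⟨perp C, fun hmem => hC (perp C) hmem (le_of_eq (ann_perp C)), ?_⟩
    have h := pRank_congr (p := p) (quot_ann_equiv (perp C)).some
    rw [ann_perp C] at h
    exact h
  · rintro ⟨B, hB, rfl⟩
    refine ⟨ann B, ?_, (pRank_congr (quot_ann_equiv B).some).symm⟩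
    intro A' hA' hle
    have hBA' : B ≤ A' := by
      intro b hb
      have hb' : b ∈ perp (ann A') := fun χ hχ => (hle hχ) b hb
      rwa [perp_ann A'] at hb'
    exact hB (hF B A' hBA' hA')
end

section
/- Let k ≥ 1 be an integer and let F be a finite subgroup of the k-fold product Circle^k of the circle group. Then the quotient group (Circle^k)/F is isomorphic, as a group, to Circle^k. -/
open Real Submodule Set Function

noncomputable section TorusQuotAux

namespace TorusQuotAux

variable (k : ℕ)

/-- The exponential homomorphism from `ℝ^k` (written multiplicatively) onto `Circle^k`. -/
def expPi : Multiplicative (Fin k → ℝ) →* (Fin k → Circle) where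
  toFun x i := Circle.exp (Multiplicative.toAdd x i)
  map_one' := funext fun _ => Circle.exp_zero
  map_mul' x y := funext fun i => Circle.exp_add _ _

lemma expPi_surjective : Surjective (expPi k) := fun z =>
  ⟨Multiplicative.ofAdd fun i => Complex.arg (z i), funext fun i => Circle.exp_arg (z i)⟩

/-- The lattice `(cℤ)^k` inside `ℝ^k`. -/
def lat (c : ℝ) : Submodule ℤ (Fin k → ℝ) := Submodule.pi Set.univ fun _ => span ℤ {c}

lemma mem_lat {c : ℝ} {x : Fin k → ℝ} : x ∈ lat k c ↔ ∀ i, ∃ m : ℤ, m • c = x i := by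
  simp [lat, Submodule.mem_pi, Submodule.mem_span_singleton]

def latVec (c : ℝ) : Fin k → (Fin k → ℝ) := fun i => Pi.single i c

lemma latVec_eq_smul (c : ℝ) (i : Fin k) :
    latVec k c i = c • Pi.basisFun ℝ (Fin k) i := by
  funext j
  simp [latVec, Pi.single_apply, Pi.basisFun_apply, Pi.smul_apply]


lemma lat_eq_span (c : ℝ) : lat k c = span ℤ (range (latVec k c)) := by
  apply le_antisymm
  · intro x hx
    choose m hm using (mem_lat k).mp hx
    have hx' : x = ∑ i, m i • latVec k c i := by
      funext j
      rw [Finset.sum_apply]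
      simp [latVec, Pi.single_apply, ← hm j]
    rw [hx']
    exact sum_mem fun i _ => smul_mem _ _ (subset_span (mem_range_self i))
  · rw [span_le]
    rintro _ ⟨i, rfl⟩
    rw [SetLike.mem_coe, mem_lat]
    intro j
    by_cases h : j = i
    · subst h; exact ⟨1, by simp [latVec]⟩
    · exact ⟨0, by simp [latVec, Pi.single_apply, h]⟩

lemma latVec_linearIndependent {c : ℝ} (hc : c ≠ 0) :
    LinearIndependent ℤ (latVec k c) := by
  have hR : LinearIndependent ℝ (latVec k c) := by
    have hb := ((Pi.basisFun ℝ (Fin k)).isUnitSMul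
      (fun _ : Fin k => (isUnit_iff_ne_zero.mpr hc))).linearIndependent
    have : ⇑((Pi.basisFun ℝ (Fin k)).isUnitSMul
        (fun _ : Fin k => (isUnit_iff_ne_zero.mpr hc))) = latVec k c := by
      funext i
      rw [Module.Basis.isUnitSMul_apply, latVec_eq_smul]
    rwa [this] at hb
  exact hR.restrict_scalars (by intro a b h; simp only [zsmul_eq_mul, mul_one] at h; exact_mod_cast h)

def latBasis (c : ℝ) (hc : c ≠ 0) : Module.Basis (Fin k) ℤ (lat k c) :=
  (Module.Basis.span (latVec_linearIndependent k hc)).map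
    (LinearEquiv.ofEq _ _ (lat_eq_span k c).symm)

end TorusQuotAux

end TorusQuotAux


open TorusQuotAux

/-- For `k ≥ 1` and a finite subgroup `F` of the `k`-fold product `Circle^k`
of the circle group, the quotient group `(Circle^k)/F` is isomorphic, as a
group, to `Circle^k`. -/
theorem torus_quotient_finite_subgroup (k : ℕ) (hk : 1 ≤ k)
    (F : Subgroup (Fin k → Circle)) [Finite F] :
    Nonempty (((Fin k → Circle) ⧸ F) ≃* (Fin k → Circle)) := by
  classical
  let ψ : Multiplicative (Fin k → ℝ) →* ((Fin k → Circle) ⧸ F) :=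
    (QuotientGroup.mk' F).comp (expPi k)
  have hψ : Function.Surjective ψ :=
    (QuotientGroup.mk'_surjective F).comp (expPi_surjective k)
  let Lsub : Submodule ℤ (Fin k → ℝ) :=
    { carrier := {x | expPi k (Multiplicative.ofAdd x) ∈ F}
      add_mem' := by
        intro a b ha hb
        have h : expPi k (Multiplicative.ofAdd (a + b))
            = expPi k (Multiplicative.ofAdd a) * expPi k (Multiplicative.ofAdd b) :=
          map_mul _ _ _
        show expPi k (Multiplicative.ofAdd (a + b)) ∈ F
        rw [h]; exact mul_mem ha hb
      zero_mem' := by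
        show expPi k (Multiplicative.ofAdd 0) ∈ F
        rw [ofAdd_zero, map_one]; exact one_mem F
      smul_mem' := by
        intro m x hx
        show expPi k (Multiplicative.ofAdd (m • x)) ∈ F
        rw [show Multiplicative.ofAdd (m • x) = (Multiplicative.ofAdd x) ^ m from rfl,
          map_zpow]
        exact zpow_mem hx m }
  have hexp1 : ∀ x : Multiplicative (Fin k → ℝ),
      expPi k x = 1 ↔ ∀ i, Circle.exp (Multiplicative.toAdd x i) = 1 := by
    intro x
    constructor
    · exact fun h i => congrFun h i
    · intro h; funext i; exact h i
  have hker_psi : ∀ x : Multiplicative (Fin k → ℝ),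
      x ∈ ψ.ker ↔ Multiplicative.toAdd x ∈ Lsub := by
    intro x
    rw [MonoidHom.mem_ker]
    show (QuotientGroup.mk' F) (expPi k x) = 1 ↔ _
    rw [QuotientGroup.mk'_apply, QuotientGroup.eq_one_iff]
    exact Iff.rfl
  have hker_exp : ∀ x : Multiplicative (Fin k → ℝ),
      x ∈ (expPi k).ker ↔ Multiplicative.toAdd x ∈ lat k (2 * π) := by
    intro x
    rw [MonoidHom.mem_ker, hexp1, mem_lat]
    refine forall_congr' fun i => ?_
    rw [Circle.exp_eq_one]
    constructor
    · rintro ⟨m, hm⟩; exact ⟨m, by rw [zsmul_eq_mul, ← hm]⟩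
    · rintro ⟨m, hm⟩; exact ⟨m, by rw [← hm, zsmul_eq_mul]⟩
  have h2pi : (2 * π) ≠ 0 := by positivity
  have hZL : lat k (2 * π) ≤ Lsub := by
    intro x hx
    show expPi k (Multiplicative.ofAdd x) ∈ F
    have h : expPi k (Multiplicative.ofAdd x) = 1 := by
      rw [hexp1]
      intro i
      obtain ⟨m, hm⟩ := (mem_lat k).mp hx i
      show Circle.exp (x i) = 1
      rw [← hm, zsmul_eq_mul, Circle.exp_int_mul_two_pi]
    rw [h]; exact one_mem F
  set n := Nat.card F with hn
  have hn0 : 0 < n := Nat.card_pos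
  have hnR : (0:ℝ) < n := by exact_mod_cast hn0
  have h2pin : (2 * π / n) ≠ 0 := by positivity
  have hLW : Lsub ≤ lat k (2 * π / n) := by
    intro x hx
    have hpow : (expPi k (Multiplicative.ofAdd x)) ^ n = 1 := by
      have h := pow_card_eq_one' (G := F) (x := ⟨expPi k (Multiplicative.ofAdd x), hx⟩)
      have h2 := congrArg (Subtype.val) h
      push_cast at h2
      exact h2
    have hpow' : expPi k (Multiplicative.ofAdd (n • x)) = 1 := by
      rw [show Multiplicative.ofAdd (n • x) = (Multiplicative.ofAdd x) ^ n from rfl, map_pow]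
      exact hpow
    rw [mem_lat]
    intro i
    have h3 := (hexp1 _).mp hpow' i
    have h4 : Multiplicative.toAdd (Multiplicative.ofAdd (n • x)) i = (n:ℝ) * x i := by
      show (n • x) i = (n:ℝ) * x i
      simp [nsmul_eq_mul]
    rw [h4] at h3
    obtain ⟨m, hm⟩ := Circle.exp_eq_one.mp h3
    refine ⟨m, ?_⟩
    rw [zsmul_eq_mul]
    field_simp
    linarith [hm]
  -- a ℤ-basis of the preimage lattice
  obtain ⟨d, bN⟩ := Submodule.basisOfPid (latBasis k _ h2pin)
    (Submodule.comap (lat k (2 * π / n)).subtype Lsub)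
  let bL : Module.Basis (Fin d) ℤ Lsub := bN.map (Submodule.comapSubtypeEquivOfLe hLW)
  haveI : Module.Finite ℤ Lsub := Module.Finite.of_basis bL
  haveI : Module.Finite ℤ (lat k (2 * π / n)) := Module.Finite.of_basis (latBasis k _ h2pin)
  have hfinL : Module.finrank ℤ Lsub = d := by
    rw [Module.finrank_eq_card_basis bL, Fintype.card_fin]
  have hdk : d = k := by
    have h1 : Module.finrank ℤ (lat k (2 * π)) ≤ Module.finrank ℤ Lsub :=
      LinearMap.finrank_le_finrank_of_injective (f := Submodule.inclusion hZL)
        (Submodule.inclusion_injective hZL)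
    have h2 : Module.finrank ℤ Lsub ≤ Module.finrank ℤ (lat k (2 * π / n)) :=
      LinearMap.finrank_le_finrank_of_injective (f := Submodule.inclusion hLW)
        (Submodule.inclusion_injective hLW)
    rw [Module.finrank_eq_card_basis (latBasis k _ h2pi), Fintype.card_fin, hfinL] at h1
    rw [hfinL, Module.finrank_eq_card_basis (latBasis k _ h2pin), Fintype.card_fin] at h2
    omega
  let bK : Module.Basis (Fin k) ℤ Lsub := bL.reindex (finCongr hdk)
  let v : Fin k → (Fin k → ℝ) := fun i => (bK i : Fin k → ℝ)
  have hspan : (Lsub : Submodule ℤ (Fin k → ℝ)) = span ℤ (Set.range v) := by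
    have h1 : span ℤ (Set.range ⇑bK) = (⊤ : Submodule ℤ Lsub) := bK.span_eq
    have h2 := congrArg (Submodule.map Lsub.subtype) h1
    rw [Submodule.map_span, Submodule.map_subtype_top] at h2
    rw [← h2]
    congr 1
    rw [← Set.range_comp]
    rfl
  have hsp : ⊤ ≤ span ℝ (Set.range v) := by
    rw [← (Pi.basisFun ℝ (Fin k)).span_eq, span_le]
    rintro _ ⟨i, rfl⟩
    have h1 : latVec k (2 * π) i ∈ lat k (2 * π) := by
      rw [lat_eq_span]; exact subset_span (mem_range_self i)
    have h2 : latVec k (2 * π) i ∈ span ℤ (Set.range v) := hspan ▸ hZL h1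
    have hmem : latVec k (2 * π) i ∈ span ℝ (Set.range v) :=
      Submodule.span_subset_span ℤ ℝ _ h2
    have h3 : Pi.basisFun ℝ (Fin k) i = (2 * π)⁻¹ • latVec k (2 * π) i := by
      rw [latVec_eq_smul, smul_smul, inv_mul_cancel₀ h2pi, one_smul]
    rw [SetLike.mem_coe, h3]
    exact Submodule.smul_mem _ _ hmem
  have hcard : Fintype.card (Fin k) = Module.finrank ℝ (Fin k → ℝ) := by
    rw [Fintype.card_fin, Module.finrank_pi]
    exact (Fintype.card_fin k).symm
  let bR := basisOfTopLeSpanOfCardEqFinrank v hsp hcard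
  let bT := (Pi.basisFun ℝ (Fin k)).isUnitSMul (fun _ : Fin k => isUnit_iff_ne_zero.mpr h2pi)
  let eLin : (Fin k → ℝ) ≃ₗ[ℝ] (Fin k → ℝ) := bR.equiv bT (Equiv.refl _)
  have hev : ∀ i, eLin (v i) = latVec k (2 * π) i := by
    intro i
    have h1 : bR i = v i := congrFun (coe_basisOfTopLeSpanOfCardEqFinrank v hsp hcard) i
    rw [← h1]
    show (bR.equiv bT (Equiv.refl _)) (bR i) = _
    rw [Module.Basis.equiv_apply, Equiv.refl_apply, Module.Basis.isUnitSMul_apply, ← latVec_eq_smul]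
  let eInt : (Fin k → ℝ) ≃ₗ[ℤ] (Fin k → ℝ) := eLin.restrictScalars ℤ
  have hmapL : Submodule.map (eInt : (Fin k → ℝ) →ₗ[ℤ] (Fin k → ℝ)) Lsub = lat k (2 * π) := by
    rw [hspan, Submodule.map_span, lat_eq_span, ← Set.range_comp]
    exact congrArg (span ℤ) (congrArg Set.range (funext hev))
  let auto : Multiplicative (Fin k → ℝ) ≃* Multiplicative (Fin k → ℝ) :=
    AddEquiv.toMultiplicative eInt.toAddEquiv
  have hauto : ∀ x : Multiplicative (Fin k → ℝ),
      Multiplicative.toAdd (auto x) = eInt (Multiplicative.toAdd x) := fun _ => rfl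
  have hmapker : ψ.ker.map (auto : Multiplicative (Fin k → ℝ) ≃* Multiplicative (Fin k → ℝ))
      = (expPi k).ker := by
    ext g
    rw [Subgroup.mem_map, hker_exp]
    constructor
    · rintro ⟨x, hx, rfl⟩
      rw [← hmapL]
      exact Submodule.mem_map_of_mem ((hker_psi x).mp hx)
    · intro hg
      rw [← hmapL] at hg
      obtain ⟨y, hy, hyg⟩ := hg
      refine ⟨Multiplicative.ofAdd y, (hker_psi _).mpr hy, ?_⟩
      apply Multiplicative.toAdd.injective
      exact hyg
  exact ⟨((QuotientGroup.quotientKerEquivOfSurjective ψ hψ).symm).trans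
    ((QuotientGroup.congr ψ.ker (expPi k).ker auto hmapker).trans
      (QuotientGroup.quotientKerEquivOfSurjective (expPi k) (expPi_surjective k)))⟩
end

section
/- Let G be a group, Σ ≤ G a subgroup, and Δ ≤ Σ a commutative subgroup that is self-centralizing in Σ, i.e. the centralizer of Δ in Σ equals Δ. Let C denote the centralizer of Δ in G (so Δ ≤ C). For every left Σ-set X, the map (C/Δ) × X^Δ → (G ×_Σ X)^Δ sending (cΔ, x) to [c, x] is well-defined and injective. If moreover { u ∈ G : u⁻¹Δu ⊆ Σ } = C·Σ, then this map is a bijection. -/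
/-- The equivalence relation on `G × X` defining the induced `G`-set
`G ×_Σ X`: `(gσ, x) ∼ (g, σ·x)` for `σ ∈ Σ`. -/
def indSetoid (G : Type) [Group G] (S : Subgroup G) (X : Type) [MulAction S X] :
    Setoid (G × X) where
  r a b := ∃ σ : S, b.1 = a.1 * σ ∧ a.2 = σ • b.2
  iseqv := by
    constructor
    · intro a
      exact ⟨1, by simp, by simp⟩
    · rintro a b ⟨σ, h1, h2⟩
      exact ⟨σ⁻¹, by simp [h1, mul_assoc], by simp [h2]⟩
    · rintro a b c ⟨σ, h1, h2⟩ ⟨τ, h3, h4⟩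
      exact ⟨σ * τ, by simp [h3, h1, mul_assoc], by simp [h2, h4, mul_smul]⟩

/-- The induced `G`-set `G ×_Σ X`. -/
def IndSet (G : Type) [Group G] (S : Subgroup G) (X : Type) [MulAction S X] : Type :=
  Quotient (indSetoid G S X)

/-- The action of `g : G` on the induced set `G ×_Σ X`, by left multiplication
on the first coordinate. -/
def gAct (G : Type) [Group G] (S : Subgroup G) (X : Type) [MulAction S X] (g : G) :
    IndSet G S X → IndSet G S X :=
  Quotient.map (fun a => (g * a.1, a.2)) (by
    rintro a b ⟨σ, h1, h2⟩
    exact ⟨σ, by simp [h1, mul_assoc], h2⟩)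

section Aux

variable {G : Type} [Group G] {S D : Subgroup G} {X : Type} [MulAction S X]

theorem indKey (g g' : G) (x x' : X) :
    Quotient.mk (indSetoid G S X) (g, x) = Quotient.mk (indSetoid G S X) (g', x') ↔
    ∃ σ : S, g' = g * σ ∧ x = σ • x' := by
  constructor
  · intro h; exact Quotient.exact h
  · intro h; exact Quotient.sound h

def Ffun (hDS : D ≤ S)
    (p : ((Subgroup.centralizer (D : Set G)) ⧸
            D.subgroupOf (Subgroup.centralizer (D : Set G))) ×
          {x : X // ∀ (δ : G) (hδ : δ ∈ D), (⟨δ, hDS hδ⟩ : S) • x = x}) :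
    IndSet G S X :=
  Quotient.liftOn' p.1 (fun c => Quotient.mk (indSetoid G S X) ((c : G), p.2.1))
    (by
      intro a b hab
      have h : (↑(a⁻¹ * b) : G) ∈ D := Subgroup.mem_subgroupOf.mp (QuotientGroup.leftRel_apply.mp hab)
      apply Quotient.sound
      refine ⟨⟨(↑(a⁻¹ * b) : G), hDS h⟩, ?_, ?_⟩
      · show (b : G) = (a : G) * ((a : G)⁻¹ * (b : G))
        simp
      · exact (p.2.2 _ h).symm)

theorem Ffun_fixed (hDS : D ≤ S)
    (p : ((Subgroup.centralizer (D : Set G)) ⧸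
            D.subgroupOf (Subgroup.centralizer (D : Set G))) ×
          {x : X // ∀ (δ : G) (hδ : δ ∈ D), (⟨δ, hDS hδ⟩ : S) • x = x}) :
    ∀ δ ∈ D, gAct G S X δ (Ffun hDS p) = Ffun hDS p := by
  obtain ⟨q, x⟩ := p
  induction q using Quotient.inductionOn' with
  | h c =>
    intro δ hδ
    show Quotient.mk (indSetoid G S X) (δ * (c : G), x.1)
        = Quotient.mk (indSetoid G S X) ((c : G), x.1)
    apply Quotient.sound
    refine ⟨⟨δ⁻¹, hDS (inv_mem hδ)⟩, ?_, ?_⟩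
    · show (c : G) = δ * (c : G) * δ⁻¹
      have h := c.2 δ hδ
      rw [h]
      simp
    · exact (x.2 δ⁻¹ (inv_mem hδ)).symm

end Aux

/-- Let `Δ ≤ Σ ≤ G` with `Δ` commutative and self-centralizing in `Σ`, and let
`C` be the centralizer of `Δ` in `G`.  For every `Σ`-set `X`, the map
`(C/Δ) × X^Δ → (G ×_Σ X)^Δ`, `(cΔ, x) ↦ [c, x]`, is well-defined and
injective; if moreover `{u ∈ G : u⁻¹Δu ⊆ Σ} = C·Σ`, it is a bijection. -/
theorem inducedSet_fixedPoints_of_selfCentralizing (G : Type) [Group G]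
    (S D : Subgroup G) (hDS : D ≤ S)
    (hcomm : ∀ a ∈ D, ∀ b ∈ D, a * b = b * a)
    (hself : S ⊓ Subgroup.centralizer (D : Set G) = D)
    (X : Type) [MulAction S X] :
    ∃ F : ((Subgroup.centralizer (D : Set G)) ⧸
            D.subgroupOf (Subgroup.centralizer (D : Set G))) ×
          {x : X // ∀ (δ : G) (hδ : δ ∈ D), (⟨δ, hDS hδ⟩ : S) • x = x} →
        {q : IndSet G S X // ∀ δ ∈ D, gAct G S X δ q = q},
      (∀ (c : Subgroup.centralizer (D : Set G))
          (x : {x : X // ∀ (δ : G) (hδ : δ ∈ D), (⟨δ, hDS hδ⟩ : S) • x = x}),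
          (F (QuotientGroup.mk c, x)).1 =
            Quotient.mk (indSetoid G S X) ((c : G), x.1)) ∧
      Function.Injective F ∧
      ({u : G | ∀ δ ∈ D, u⁻¹ * δ * u ∈ S} =
          {u : G | ∃ c ∈ Subgroup.centralizer (D : Set G), ∃ σ ∈ S, u = c * σ} →
        Function.Bijective F) := by
  refine ⟨fun p => ⟨Ffun hDS p, Ffun_fixed hDS p⟩, fun c x => rfl, ?_, ?_⟩
  case _ =>
    -- injectivity
    rintro ⟨pc, px⟩ ⟨qc, qx⟩ h
    have h1 : Ffun hDS (pc, px) = Ffun hDS (qc, qx) := congrArg Subtype.val h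
    induction pc using Quotient.inductionOn' with
    | h a =>
    induction qc using Quotient.inductionOn' with
    | h b =>
    have h2 : Quotient.mk (indSetoid G S X) ((a : G), px.1)
        = Quotient.mk (indSetoid G S X) ((b : G), qx.1) := h1
    obtain ⟨σ, hσ1, hσ2⟩ := Quotient.exact h2
    dsimp only at hσ1 hσ2
    have hval : (σ : G) = (a : G)⁻¹ * (b : G) := by
      rw [hσ1, inv_mul_cancel_left]
    have hσC : (σ : G) ∈ Subgroup.centralizer (D : Set G) := by
      rw [hval]; exact mul_mem (inv_mem a.2) b.2
    have hσD : (σ : G) ∈ D := by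
      rw [← hself]; exact ⟨σ.2, hσC⟩
    have hx : px = qx := by
      apply Subtype.ext
      rw [hσ2]
      exact qx.2 (σ : G) hσD
    have hcoset : (Quotient.mk'' a :
        (Subgroup.centralizer (D : Set G)) ⧸
          D.subgroupOf (Subgroup.centralizer (D : Set G))) = Quotient.mk'' b := by
      apply Quotient.sound'
      apply QuotientGroup.leftRel_apply.mpr
      apply Subgroup.mem_subgroupOf.mpr
      show ((a : G)⁻¹ * (b : G)) ∈ D
      rw [← hval]; exact hσD
    exact Prod.ext hcoset hx
  case _ =>
    intro hU
    refine ⟨?_, ?_⟩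
    case _ =>
      -- injectivity again (reuse argument)
      rintro ⟨pc, px⟩ ⟨qc, qx⟩ h
      have h1 : Ffun hDS (pc, px) = Ffun hDS (qc, qx) := congrArg Subtype.val h
      induction pc using Quotient.inductionOn' with
      | h a =>
      induction qc using Quotient.inductionOn' with
      | h b =>
      have h2 : Quotient.mk (indSetoid G S X) ((a : G), px.1)
          = Quotient.mk (indSetoid G S X) ((b : G), qx.1) := h1
      obtain ⟨σ, hσ1, hσ2⟩ := Quotient.exact h2
      dsimp only at hσ1 hσ2
      have hval : (σ : G) = (a : G)⁻¹ * (b : G) := by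
        rw [hσ1, inv_mul_cancel_left]
      have hσC : (σ : G) ∈ Subgroup.centralizer (D : Set G) := by
        rw [hval]; exact mul_mem (inv_mem a.2) b.2
      have hσD : (σ : G) ∈ D := by
        rw [← hself]; exact ⟨σ.2, hσC⟩
      have hx : px = qx := by
        apply Subtype.ext
        rw [hσ2]
        exact qx.2 (σ : G) hσD
      have hcoset : (Quotient.mk'' a :
          (Subgroup.centralizer (D : Set G)) ⧸
            D.subgroupOf (Subgroup.centralizer (D : Set G))) = Quotient.mk'' b := by
        apply Quotient.sound'
        apply QuotientGroup.leftRel_apply.mpr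
        apply Subgroup.mem_subgroupOf.mpr
        show ((a : G)⁻¹ * (b : G)) ∈ D
        rw [← hval]; exact hσD
      exact Prod.ext hcoset hx
    case _ =>
      -- surjectivity
      rintro ⟨q, hq⟩
      obtain ⟨⟨g, x⟩, rfl⟩ := Quotient.exists_rep q
      have key : ∀ δ ∈ D, ∃ hmem : g⁻¹ * δ * g ∈ S,
          (⟨g⁻¹ * δ * g, hmem⟩ : S) • x = x := by
        intro δ hδ
        have h : Quotient.mk (indSetoid G S X) (δ⁻¹ * g, x)
            = Quotient.mk (indSetoid G S X) (g, x) := hq δ⁻¹ (inv_mem hδ)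
        obtain ⟨σ, h1, h2⟩ := Quotient.exact h
        have h1' : g * (σ : G) = δ * g := by
          rw [mul_assoc] at h1
          exact inv_mul_eq_iff_eq_mul.mp h1.symm
        have hv : (σ : G) = g⁻¹ * δ * g := by
          rw [mul_assoc, ← h1', inv_mul_cancel_left]
        refine ⟨hv ▸ σ.2, ?_⟩
        rw [show (⟨g⁻¹ * δ * g, hv ▸ σ.2⟩ : S) = σ from Subtype.ext hv.symm]
        exact h2.symm
      have hgU : g ∈ {u : G | ∃ c ∈ Subgroup.centralizer (D : Set G),
          ∃ σ ∈ S, u = c * σ} := by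
        rw [← hU]; intro δ hδ; exact (key δ hδ).1
      obtain ⟨c, hc, s, hs, rfl⟩ := hgU
      have hconj : ∀ δ ∈ D, (c * s)⁻¹ * δ * (c * s) = s⁻¹ * δ * s := by
        intro δ hδ
        have hcd : δ * c = c * δ := hc δ hδ
        have h2 : c⁻¹ * δ * c = δ := by
          rw [mul_assoc, hcd, inv_mul_cancel_left]
        have h3 : (c * s)⁻¹ * δ * (c * s) = s⁻¹ * (c⁻¹ * δ * c) * s := by group
        rw [h3, h2]
      have yfix : ∀ (δ : G) (hδ : δ ∈ D),
          (⟨δ, hDS hδ⟩ : S) • ((⟨s, hs⟩ : S) • x) = (⟨s, hs⟩ : S) • x := by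
        intro δ hδ
        obtain ⟨hm, hfx⟩ := key δ hδ
        have hm' : s⁻¹ * δ * s ∈ S := hconj δ hδ ▸ hm
        have hfx' : (⟨s⁻¹ * δ * s, hm'⟩ : S) • x = x := by
          rw [show (⟨s⁻¹ * δ * s, hm'⟩ : S) = ⟨(c * s)⁻¹ * δ * (c * s), hm⟩
            from Subtype.ext (hconj δ hδ).symm]
          exact hfx
        rw [← mul_smul, show (⟨δ, hDS hδ⟩ : S) * ⟨s, hs⟩
            = ⟨s, hs⟩ * ⟨s⁻¹ * δ * s, hm'⟩
            from Subtype.ext (show δ * s = s * (s⁻¹ * δ * s) by group),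
          mul_smul, hfx']
      refine ⟨(QuotientGroup.mk ⟨c, hc⟩, ⟨(⟨s, hs⟩ : S) • x, yfix⟩), ?_⟩
      apply Subtype.ext
      show Quotient.mk (indSetoid G S X) (c, (⟨s, hs⟩ : S) • x)
          = Quotient.mk (indSetoid G S X) (c * s, x)
      exact Quotient.sound ⟨⟨s, hs⟩, rfl, rfl⟩
end
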